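/- arXiv:2507.10931 — 6 statements merged into one kernel-verified Lean document; each statement's English description precedes it below -/
import Mathlib

section
/- In a compact Hausdorff right topological semigroup S, for every idempotent e there exists a minimal idempotent f with f ⪯ e, i.e., f*e = e*f = f and any idempotent g ⪯ f equals f. -/
/-- In a compact Hausdorff right topological semigroup, below every idempotent
there is a minimal idempotent. -/
theorem stmt_5 {S : Type*} [Semigroup S] [TopologicalSpace S] [CompactSpace S]
    [T2Space S] [Nonempty S]
    (hright : ∀ t : S, Continuous fun s : S => s * t)
    (e : S) (he : e * e = e) :
    ∃ f : S, f * f = f ∧ f * e = f ∧ e * f = f ∧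
      ∀ g : S, g * g = g → g * f = g → f * g = g → g = f := by
  -- the family of closed nonempty left ideals consisting of elements fixed by `· * e`
  let F : Set (Set S) :=
    { L | IsClosed L ∧ L.Nonempty ∧ (∀ s : S, ∀ x ∈ L, s * x ∈ L) ∧ ∀ x ∈ L, x * e = x }
  have hL0 : Set.range (· * e) ∈ F := by
    refine ⟨?_, ⟨e, e, he⟩, ?_, ?_⟩
    · have : Set.range (· * e) = (· * e) '' Set.univ := (Set.image_univ).symm
      rw [this]
      exact ((hright e).isClosedMap _ isClosed_univ)
    · rintro s _ ⟨t, rfl⟩; exact ⟨s * t, by simp [mul_assoc]⟩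
    · rintro _ ⟨t, rfl⟩; simp only [mul_assoc, he]
  -- Zorn's lemma: a minimal such left ideal
  obtain ⟨L, hLmin⟩ : ∃ L, Minimal (· ∈ F) L := by
    refine zorn_superset F fun c hcF hc => ?_
    rcases c.eq_empty_or_nonempty with rfl | hcne
    · exact ⟨Set.range (· * e), hL0, by simp⟩
    refine ⟨⋂₀ c, ⟨isClosed_sInter fun t ht => (hcF ht).1, ?_, ?_, ?_⟩,
      fun s hs => Set.sInter_subset_of_mem hs⟩
    · haveI : Nonempty c := hcne.coe_sort
      exact IsCompact.nonempty_sInter_of_directed_nonempty_isCompact_isClosed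
        (fun x hx y hy => (hc.total hx hy).elim
          (fun h => ⟨x, hx, subset_rfl, h⟩) (fun h => ⟨y, hy, h, subset_rfl⟩))
        (fun U hU => (hcF hU).2.1)
        (fun U hU => (hcF hU).1.isCompact) (fun U hU => (hcF hU).1)
    · intro s x hx
      exact Set.mem_sInter.mpr fun t ht => (hcF ht).2.2.1 s x (Set.mem_sInter.mp hx t ht)
    · intro x hx
      obtain ⟨t, ht⟩ := hcne
      exact (hcF ht).2.2.2 x (Set.mem_sInter.mp hx t ht)
  obtain ⟨L_closed, L_ne, L_ideal, L_fix⟩ := hLmin.prop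
  -- Ellis–Numakura: an idempotent f' in L
  obtain ⟨f', hf'L, hf'⟩ := exists_idempotent_in_compact_subsemigroup hright L L_ne
    L_closed.isCompact (fun x hx y hy => L_ideal x y hy)
  have hf'e : f' * e = f' := L_fix f' hf'L
  refine ⟨e * f', ?_, ?_, ?_, ?_⟩
  · calc e * f' * (e * f') = e * (f' * e * f') := by simp [mul_assoc]
    _ = e * f' := by rw [hf'e, hf']
  · rw [mul_assoc, hf'e]
  · rw [← mul_assoc, he]
  · intro g hg hgf hfg
    have hfL : e * f' ∈ L := L_ideal e f' hf'L
    have hgL : g ∈ L := hgf ▸ L_ideal g _ hfL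
    have h1 : e * f' * e = e * f' := by rw [mul_assoc, hf'e]
    have hge : g * e = g := by
      conv_lhs => rw [← hgf]
      rw [mul_assoc g (e * f') e, h1, hgf]
    -- L * g is a member of F contained in L, hence equals L
    have hLg : (· * g) '' L ∈ F := by
      refine ⟨((hright g).isClosedMap _ L_closed), L_ne.image _, ?_, ?_⟩
      · rintro s _ ⟨x, hx, rfl⟩
        exact ⟨s * x, L_ideal s x hx, by simp [mul_assoc]⟩
      · rintro _ ⟨x, hx, rfl⟩
        rw [mul_assoc, hge]
    have hsub : (· * g) '' L ⊆ L := by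
      rintro _ ⟨x, hx, rfl⟩; exact L_ideal x g hgL
    have hEq : (· * g) '' L = L := hLmin.eq_of_subset hLg hsub
    obtain ⟨x, hxL, hx⟩ : e * f' ∈ (· * g) '' L := hEq.symm ▸ hfL
    have : e * f' * g = e * f' := by rw [← hx, mul_assoc, hg]
    rw [hfg] at this
    exact this
end

section
/- Let S be a compact affine right topological semigroup (a compact convex subset of a locally convex topological vector space with an associative multiplication that is affine and continuous in the left variable). Then every minimal closed left ideal J of S is a left zero semigroup: x*y = x for all x, y ∈ J. In particular every element of a minimal closed left ideal is idempotent. -/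
/-- A single continuous affine self-map of a nonempty compact convex subset of a
topological vector space has a fixed point. -/
lemma affine_fixed_point {V : Type*} [AddCommGroup V] [Module ℝ V] [TopologicalSpace V]
    [IsTopologicalAddGroup V] [ContinuousSMul ℝ V] [T2Space V]
    (S : Set V) (hScomp : IsCompact S) (hSconv : Convex ℝ S) (hSne : S.Nonempty)
    (T : V → V) (hmaps : ∀ x ∈ S, T x ∈ S) (hTcont : ContinuousOn T S)
    (haffT : ∀ a b : ℝ, 0 ≤ a → 0 ≤ b → a + b = 1 →
      ∀ x ∈ S, ∀ x' ∈ S, T (a • x + b • x') = a • T x + b • T x') :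
    ∃ x ∈ S, T x = x := by
  obtain ⟨x0, hx0⟩ := hSne
  -- iterates
  set p : ℕ → V := fun n => T^[n] x0 with hp
  have hpS : ∀ n, p n ∈ S := by
    intro n
    induction n with
    | zero => exact hx0
    | succ k ih => simpa [hp, Function.iterate_succ_apply'] using hmaps _ ih
  have hpsucc : ∀ n, p (n + 1) = T (p n) := by
    intro n; simp [hp, Function.iterate_succ_apply']
  -- Cesàro averages, defined recursively
  set c : ℕ → V := fun n => Nat.rec (p 0)
    (fun k ck => ((k + 1 : ℝ) / (k + 2)) • ck + ((k + 2 : ℝ))⁻¹ • p (k + 1)) n with hc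
  have hcsucc : ∀ n, c (n + 1) =
      ((n + 1 : ℝ) / (n + 2)) • c n + ((n + 2 : ℝ))⁻¹ • p (n + 1) := fun n => rfl
  have hden : ∀ n : ℕ, (0:ℝ) < (n:ℝ) + 2 := by
    intro n; positivity
  have hab : ∀ n : ℕ, ((n + 1 : ℝ) / (n + 2)) + ((n + 2 : ℝ))⁻¹ = 1 := by
    intro n
    field_simp
    ring
  have habnn : ∀ n : ℕ, (0:ℝ) ≤ (n + 1 : ℝ) / (n + 2) ∧ (0:ℝ) ≤ ((n + 2 : ℝ))⁻¹ := by
    intro n; constructor <;> positivity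
  have hcS : ∀ n, c n ∈ S := by
    intro n
    induction n with
    | zero => exact hpS 0
    | succ k ih =>
      rw [hcsucc]
      exact hSconv ih (hpS (k+1)) (habnn k).1 (habnn k).2 (hab k)
  -- the key invariant
  have hinv : ∀ n, T (c n) - c n = ((n : ℝ) + 1)⁻¹ • (p (n + 1) - p 0) := by
    intro n
    induction n with
    | zero =>
      simp [hc, hpsucc 0]
    | succ k ih =>
      have hk2 : ((k:ℝ) + 2) ≠ 0 := (hden k).ne'
      have hTc : T (c (k + 1)) = ((k + 1 : ℝ) / (k + 2)) • T (c k)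
          + ((k + 2 : ℝ))⁻¹ • T (p (k + 1)) := by
        rw [hcsucc]
        exact haffT _ _ (habnn k).1 (habnn k).2 (hab k) _ (hcS k) _ (hpS (k+1))
      have ihe : T (c k) = c k + ((k : ℝ) + 1)⁻¹ • (p (k + 1) - p 0) := by
        rw [← ih]; abel
      rw [hTc, ihe, hcsucc, ← hpsucc (k+1)]
      have h1 : ((k + 1 : ℝ) / (k + 2)) • (((k:ℝ) + 1)⁻¹ • (p (k + 1) - p 0))
          = ((k:ℝ) + 2)⁻¹ • (p (k + 1) - p 0) := by
        rw [smul_smul]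
        congr 1
        have hk1 : ((k:ℝ) + 1) ≠ 0 := by positivity
        field_simp
      rw [smul_add, h1]
      push_cast
      module
  -- T (c n) - c n tends to 0
  have hbdd : Bornology.IsVonNBounded ℝ ((fun q : V × V => q.1 - q.2) '' (S ×ˢ S)) := by
    letI : UniformSpace V := IsTopologicalAddGroup.rightUniformSpace V
    haveI : IsUniformAddGroup V := isUniformAddGroup_of_addCommGroup
    exact ((hScomp.prod hScomp).image (by fun_prop)).totallyBounded.isVonNBounded ℝ
  have hmemD : ∀ n, p (n + 1) - p 0 ∈ (fun q : V × V => q.1 - q.2) '' (S ×ˢ S) := by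
    intro n
    exact ⟨(p (n+1), p 0), ⟨hpS _, hpS _⟩, rfl⟩
  have hεz : Filter.Tendsto (fun n : ℕ => ((n : ℝ) + 1)⁻¹) Filter.atTop (nhds 0) :=
    tendsto_one_div_add_atTop_nhds_zero_nat.congr (by intro n; rw [one_div])
  have htend0 : Filter.Tendsto (fun n => T (c n) - c n) Filter.atTop (nhds 0) := by
    have := hbdd.smul_tendsto_zero (x := fun n => p (n + 1) - p 0)
      (Filter.Eventually.of_forall hmemD) hεz
    refine this.congr fun n => ?_
    simp [Pi.smul_apply', (hinv n).symm]
  -- get a cluster point of the averages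
  obtain ⟨x, hxS, hx⟩ := hScomp.exists_clusterPt
    (f := Filter.map c Filter.atTop)
    (by rw [Filter.le_principal_iff, Filter.mem_map]
        exact Filter.Eventually.of_forall hcS)
  refine ⟨x, hxS, ?_⟩
  -- the map g = T - id is continuous on S; g x is a cluster point of g ∘ c → 0
  have hgcont : ContinuousWithinAt (fun z => T z - z) S x :=
    ((hTcont x hxS).sub (continuousWithinAt_id))
  have hle : Filter.map c Filter.atTop ≤ Filter.principal S := by
    rw [Filter.le_principal_iff, Filter.mem_map]
    exact Filter.Eventually.of_forall hcS
  have hcl : ClusterPt (T x - x) (Filter.map (fun z => T z - z) (Filter.map c Filter.atTop)) := by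
    have h1 : nhds x ⊓ Filter.map c Filter.atTop
        = nhdsWithin x S ⊓ Filter.map c Filter.atTop := by
      rw [nhdsWithin, inf_assoc, inf_of_le_right hle]
    have hne : (nhdsWithin x S ⊓ Filter.map c Filter.atTop).NeBot := by
      rw [← h1]; exact hx
    have : Filter.map (fun z => T z - z) (nhdsWithin x S ⊓ Filter.map c Filter.atTop)
        ≤ nhds (T x - x) ⊓ Filter.map (fun z => T z - z) (Filter.map c Filter.atTop) :=
      le_inf (le_trans (Filter.map_mono inf_le_left) hgcont)
        (Filter.map_mono inf_le_right)
    exact Filter.NeBot.mono (Filter.NeBot.map hne _) this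
  have : ClusterPt (T x - x) (nhds 0) :=
    hcl.mono (by rw [Filter.map_map]; exact htend0)
  have hz : T x - x = 0 := by
    by_contra hne
    exact hne (t2_iff_nhds.mp ‹T2Space V› this.neBot)
  have := sub_eq_zero.mp hz
  exact this

/-- In a compact affine right topological semigroup, every minimal closed left
ideal is a left zero semigroup; in particular all its elements are idempotent. -/
theorem stmt_9 {V : Type*} [AddCommGroup V] [Module ℝ V] [TopologicalSpace V]
    [IsTopologicalAddGroup V] [ContinuousSMul ℝ V] [T2Space V]
    [LocallyConvexSpace ℝ V]
    (S : Set V) (hScomp : IsCompact S) (hSconv : Convex ℝ S)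
    (hSne : S.Nonempty)
    (m : V → V → V)
    (hmem : ∀ x ∈ S, ∀ y ∈ S, m x y ∈ S)
    (hassoc : ∀ x ∈ S, ∀ y ∈ S, ∀ z ∈ S, m (m x y) z = m x (m y z))
    (haff : ∀ y ∈ S, ∀ a b : ℝ, 0 ≤ a → 0 ≤ b → a + b = 1 →
      ∀ x ∈ S, ∀ x' ∈ S, m (a • x + b • x') y = a • m x y + b • m x' y)
    (hcont : ∀ y ∈ S, ContinuousOn (fun x => m x y) S)
    (J : Set V) (hJ : J ⊆ S) (hJcl : IsClosed J) (hJne : J.Nonempty)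
    (hJideal : ∀ x ∈ S, ∀ j ∈ J, m x j ∈ J)
    (hJmin : ∀ J' : Set V, J' ⊆ J → IsClosed J' → J'.Nonempty →
      (∀ x ∈ S, ∀ j ∈ J', m x j ∈ J') → J' = J) :
    (∀ x ∈ J, ∀ y ∈ J, m x y = x) ∧ (∀ x ∈ J, m x x = x) := by
  have key : ∀ y ∈ J, ∀ x ∈ J, m x y = x := by
    intro y hy
    have hyS : y ∈ S := hJ hy
    -- the fixed point set of x ↦ m x y
    obtain ⟨x0, hx0S, hx0⟩ := affine_fixed_point S hScomp hSconv hSne (fun x => m x y)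
      (fun x hx => hmem x hx y hyS) (hcont y hyS)
      (fun a b ha hb hab x hx x' hx' => haff y hyS a b ha hb hab x hx x' hx')
    set F : Set V := S ∩ (fun x => m x y) ⁻¹' {z | m z y = z → False}ᶜ ∩
      {x | m x y = x} with hF
    have hFdef : {x ∈ S | m x y = x} ⊆ J := by
      rintro x ⟨hxS, hxfix⟩
      rw [← hxfix]
      exact hJideal x hxS y hy
    have hFcl : IsClosed {x ∈ S | m x y = x} := by
      have : {x ∈ S | m x y = x} = S ∩ (fun x => m x y - x) ⁻¹' {0} := by
        ext x
        simp only [Set.mem_inter_iff, Set.mem_sep_iff, Set.mem_preimage,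
          Set.mem_singleton_iff, sub_eq_zero]
      rw [this]
      exact ContinuousOn.preimage_isClosed_of_isClosed
        ((hcont y hyS).sub continuousOn_id) hScomp.isClosed isClosed_singleton
    have hFne : {x ∈ S | m x y = x}.Nonempty := ⟨x0, hx0S, hx0⟩
    have hFideal : ∀ s ∈ S, ∀ j ∈ {x ∈ S | m x y = x}, m s j ∈ {x ∈ S | m x y = x} := by
      rintro s hs j ⟨hjS, hjfix⟩
      refine ⟨hmem s hs j hjS, ?_⟩
      rw [hassoc s hs j hjS y hyS, hjfix]
    have := hJmin {x ∈ S | m x y = x} hFdef hFcl hFne hFideal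
    intro x hx
    rw [← this] at hx
    exact hx.2
  exact ⟨fun x hx y hy => key y hy x hx, fun x hx => key x hx x hx⟩
end

section
/- Let S be a compact affine right topological semigroup, J a minimal closed left ideal, and y ∈ J. Then the continuous affine self-map x ↦ x*y of J has a fixed point (via the Markov–Kakutani fixed point theorem), i.e., there exists x ∈ J with x*y = x. -/
open Filter Topology

/-- In a topological vector space, if `c n` stays in a compact set and the scalars
`((n:ℝ)+1)⁻¹` tend to zero, then `((n:ℝ)+1)⁻¹ • c n → 0`. -/
lemma aux_smul_compact_tendsto_zero {V : Type*} [AddCommGroup V] [Module ℝ V]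
    [TopologicalSpace V] [IsTopologicalAddGroup V] [ContinuousSMul ℝ V]
    {K : Set V} (hK : IsCompact K) {c : ℕ → V} (hc : ∀ n, c n ∈ K) :
    Tendsto (fun n : ℕ => ((n : ℝ) + 1)⁻¹ • c n) atTop (𝓝 0) := by
  intro U hU
  -- for each k ∈ K pick neighborhoods A_k of 0 and W_k of k with A_k • W_k ⊆ U
  have hsm : ∀ k ∈ K, ∃ A ∈ 𝓝 (0 : ℝ), ∃ W ∈ 𝓝 k,
      ∀ t ∈ A, ∀ w ∈ W, t • w ∈ U := by
    intro k _
    have hcont : Tendsto (fun p : ℝ × V => p.1 • p.2) (𝓝 (0, k)) (𝓝 (0 : V)) := by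
      have := (continuous_smul (M := ℝ) (X := V)).tendsto ((0 : ℝ), k)
      simpa using this
    have h2 := hcont hU
    rw [mem_map, nhds_prod_eq, mem_prod_iff] at h2
    obtain ⟨A, hA, W, hW, hAW⟩ := h2
    exact ⟨A, hA, W, hW, fun t ht w hw => hAW (Set.mk_mem_prod ht hw)⟩
  choose! A hA W hW hAW using hsm
  obtain ⟨t, htK, hcov⟩ := hK.elim_nhds_subcover W (fun k hk => hW k hk)
  -- intersect the A's over the finite set t
  have hAint : (⋂ k ∈ t, A k) ∈ 𝓝 (0 : ℝ) := by
    refine (Filter.biInter_finset_mem _).2 fun k hk => hA k (htK k hk)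
  have hscal : Tendsto (fun n : ℕ => ((n : ℝ) + 1)⁻¹) atTop (𝓝 0) := by
    simpa [one_div] using tendsto_one_div_add_atTop_nhds_zero_nat (𝕜 := ℝ)
  have hev : ∀ᶠ n : ℕ in atTop, ((n : ℝ) + 1)⁻¹ ∈ ⋂ k ∈ t, A k := hscal hAint
  rw [Filter.mem_map]
  filter_upwards [hev] with n hn
  obtain ⟨k, hk, hck⟩ : ∃ k ∈ t, c n ∈ W k := by
    have := hcov (hc n)
    simpa using this
  exact hAW k (htK k hk) _ (by exact Set.mem_iInter₂.1 hn k hk) _ hck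

/-- Markov–Kakutani step: in a compact affine right topological semigroup, for
any y in a minimal closed left ideal J, right multiplication by y has a fixed
point in J. -/
theorem stmt_10 {V : Type*} [AddCommGroup V] [Module ℝ V] [TopologicalSpace V]
    [IsTopologicalAddGroup V] [ContinuousSMul ℝ V] [T2Space V]
    [LocallyConvexSpace ℝ V]
    (S : Set V) (hScomp : IsCompact S) (hSconv : Convex ℝ S)
    (hSne : S.Nonempty)
    (m : V → V → V)
    (hmem : ∀ x ∈ S, ∀ y ∈ S, m x y ∈ S)
    (hassoc : ∀ x ∈ S, ∀ y ∈ S, ∀ z ∈ S, m (m x y) z = m x (m y z))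
    (haff : ∀ y ∈ S, ∀ a b : ℝ, 0 ≤ a → 0 ≤ b → a + b = 1 →
      ∀ x ∈ S, ∀ x' ∈ S, m (a • x + b • x') y = a • m x y + b • m x' y)
    (hcont : ∀ y ∈ S, ContinuousOn (fun x => m x y) S)
    (J : Set V) (hJ : J ⊆ S) (hJcl : IsClosed J) (hJne : J.Nonempty)
    (hJideal : ∀ x ∈ S, ∀ j ∈ J, m x j ∈ J)
    (hJmin : ∀ J' : Set V, J' ⊆ J → IsClosed J' → J'.Nonempty →
      (∀ x ∈ S, ∀ j ∈ J', m x j ∈ J') → J' = J)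
    (y : V) (hy : y ∈ J) :
    ∃ x ∈ J, m x y = x := by
  have hyS : y ∈ S := hJ hy
  have hfc : ContinuousOn (fun x => m x y) S := hcont y hyS
  -- `S * y = J` by minimality
  have hSyJ : (fun x => m x y) '' S = J := by
    refine hJmin _ ?_ ?_ ?_ ?_
    · rintro z ⟨x, hx, rfl⟩; exact hJideal x hx y hy
    · exact (hScomp.image_of_continuousOn hfc).isClosed
    · exact hSne.image _
    · rintro x hx j ⟨a, ha, rfl⟩
      exact ⟨m x a, hmem x hx a ha, hassoc x hx a ha y hyS⟩
  -- hence J is convex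
  have hJconv : Convex ℝ J := by
    rw [← hSyJ]
    rintro z₁ ⟨x₁, hx₁, rfl⟩ z₂ ⟨x₂, hx₂, rfl⟩ a b ha hb hab
    exact ⟨a • x₁ + b • x₂, hSconv hx₁ hx₂ ha hb hab,
      haff y hyS a b ha hb hab x₁ hx₁ x₂ hx₂⟩
  have hJcomp : IsCompact J := hScomp.of_isClosed_subset hJcl hJ
  obtain ⟨x₀, hx₀⟩ := hJne
  -- iterates of right multiplication by y
  set u : ℕ → V := fun n => (fun x => m x y)^[n] x₀ with hu_def
  have hu : ∀ n, u n ∈ J := by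
    intro n; induction n with
    | zero => exact hx₀
    | succ n ih =>
        have : u (n + 1) = m (u n) y := Function.iterate_succ_apply' _ n x₀
        rw [this]; exact hJideal (u n) (hJ ih) y hy
  have hu_succ : ∀ n, u (n + 1) = m (u n) y := fun n =>
    Function.iterate_succ_apply' _ n x₀
  -- Cesàro averages, defined recursively
  set b : ℕ → V := fun n => Nat.rec x₀
    (fun n bn => ((n : ℝ) + 2)⁻¹ • u (n + 1) + (((n : ℝ) + 1) / ((n : ℝ) + 2)) • bn) n
    with hb_def
  have hb0 : b 0 = x₀ := rfl
  have hbs : ∀ n, b (n + 1)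
      = ((n : ℝ) + 2)⁻¹ • u (n + 1) + (((n : ℝ) + 1) / ((n : ℝ) + 2)) • b n :=
    fun n => rfl
  have hb : ∀ n, b n ∈ J := by
    intro n; induction n with
    | zero => exact hx₀
    | succ n ih =>
        rw [hbs n]
        exact hJconv (hu (n + 1)) ih (by positivity) (by positivity) (by field_simp; ring)
  -- key identity
  have key : ∀ n, m (b n) y - b n = ((n : ℝ) + 1)⁻¹ • (u (n + 1) - u 0) := by
    intro n; induction n with
    | zero => simp [hb0, ← hu_succ 0, hu_def]
    | succ n ih =>
        have h1 : m (b (n + 1)) y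
            = ((n : ℝ) + 2)⁻¹ • m (u (n + 1)) y
              + (((n : ℝ) + 1) / ((n : ℝ) + 2)) • m (b n) y := by
          rw [hbs n]
          exact haff y hyS _ _ (by positivity) (by positivity) (by field_simp; ring)
            (u (n + 1)) (hJ (hu (n + 1))) (b n) (hJ (hb n))
        have h2 : m (b n) y = b n + ((n : ℝ) + 1)⁻¹ • (u (n + 1) - u 0) := by
          rw [← ih]; abel
        rw [h1, hbs n, h2, ← hu_succ (n + 1)]
        have hn1 : ((n : ℝ) + 1) ≠ 0 := by positivity
        have hn2 : ((n : ℝ) + 2) ≠ 0 := by positivity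
        push_cast
        match_scalars <;> field_simp <;> ring
  -- the differences tend to zero
  have hten : Tendsto (fun n => m (b n) y - b n) atTop (𝓝 0) := by
    have hK : IsCompact ((fun p : V × V => p.1 - p.2) '' (J ×ˢ J)) :=
      (hJcomp.prod hJcomp).image (continuous_fst.sub continuous_snd)
    have hc : ∀ n, u (n + 1) - u 0 ∈ (fun p : V × V => p.1 - p.2) '' (J ×ˢ J) :=
      fun n => ⟨(u (n + 1), u 0), Set.mk_mem_prod (hu (n + 1)) (hu 0), rfl⟩
    have := aux_smul_compact_tendsto_zero hK hc
    refine this.congr fun n => (key n).symm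
  -- extract a cluster point via an ultrafilter
  let 𝒰 : Ultrafilter ℕ := Ultrafilter.of atTop
  have h𝒰 : (𝒰 : Filter ℕ) ≤ atTop := Ultrafilter.of_le _
  have hmapJ : J ∈ Filter.map b (𝒰 : Filter ℕ) :=
    Filter.mem_map.2 (Filter.univ_mem' fun n => hb n)
  obtain ⟨x, hxJ, hx⟩ := hJcomp.ultrafilter_le_nhds (𝒰.map b)
    (le_principal_iff.2 (by simpa using hmapJ))
  have hxten : Tendsto b (𝒰 : Filter ℕ) (𝓝 x) := hx
  have hxtenS : Tendsto b (𝒰 : Filter ℕ) (𝓝[S] x) := by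
    refine tendsto_nhdsWithin_iff.2 ⟨hxten, Filter.univ_mem' fun n => hJ (hb n)⟩
  have hMc : Tendsto (fun n => m (b n) y) (𝒰 : Filter ℕ) (𝓝 (m x y)) :=
    (hfc x (hJ hxJ)).tendsto.comp hxtenS
  have hdiff : Tendsto (fun n => m (b n) y - b n) (𝒰 : Filter ℕ) (𝓝 (m x y - x)) :=
    hMc.sub hxten
  have hdiff0 : Tendsto (fun n => m (b n) y - b n) (𝒰 : Filter ℕ) (𝓝 0) :=
    hten.mono_left h𝒰
  have : m x y - x = 0 := tendsto_nhds_unique hdiff hdiff0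
  exact ⟨x, hxJ, sub_eq_zero.1 this⟩
end

section
/- Let S be a compact affine right topological semigroup and e ∈ S a minimal idempotent. Then e*x*e = e for all x ∈ S. -/
open Filter Topology Set Bornology

/-- Marrakchi's result: if e is a minimal idempotent of a compact affine right
topological semigroup S, then e*x*e = e for all x ∈ S. -/
theorem stmt_11 {V : Type*} [AddCommGroup V] [Module ℝ V] [TopologicalSpace V]
    [IsTopologicalAddGroup V] [ContinuousSMul ℝ V] [T2Space V]
    [LocallyConvexSpace ℝ V]
    (S : Set V) (hScomp : IsCompact S) (hSconv : Convex ℝ S)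
    (hSne : S.Nonempty)
    (m : V → V → V)
    (hmem : ∀ x ∈ S, ∀ y ∈ S, m x y ∈ S)
    (hassoc : ∀ x ∈ S, ∀ y ∈ S, ∀ z ∈ S, m (m x y) z = m x (m y z))
    (haff : ∀ y ∈ S, ∀ a b : ℝ, 0 ≤ a → 0 ≤ b → a + b = 1 →
      ∀ x ∈ S, ∀ x' ∈ S, m (a • x + b • x') y = a • m x y + b • m x' y)
    (hcont : ∀ y ∈ S, ContinuousOn (fun x => m x y) S)
    (e : V) (heS : e ∈ S) (he : m e e = e)
    (hemin : ∀ g ∈ S, m g g = g → m g e = g → m e g = g → g = e) :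
    ∀ x ∈ S, m (m e x) e = e := by
  intro x hx
  have haxS : m e x ∈ S := hmem e heS x hx
  set b := m (m e x) e with hb_def
  have hbS : b ∈ S := hmem _ haxS e heS
  have hbe : m b e = b := by
    rw [hb_def, hassoc _ haxS _ heS _ heS, he]
  have h1 : m e (m e x) = m e x := by rw [← hassoc e heS e heS x hx, he]
  have heb : m e b = b := by
    rw [hb_def, ← hassoc e heS _ haxS e heS, h1]
  -- powers of b
  set pw : ℕ → V := fun n => (fun y => m y b)^[n] b with hpw_def
  have hpw0 : pw 0 = b := rfl
  have hpws : ∀ n, pw (n + 1) = m (pw n) b := fun n =>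
    Function.iterate_succ_apply' _ _ _
  have hpwS : ∀ n, pw n ∈ S := by
    intro n; induction n with
    | zero => exact hbS
    | succ n ih => rw [hpws]; exact hmem _ ih _ hbS
  have hpwe : ∀ n, m (pw n) e = pw n := by
    intro n; induction n with
    | zero => exact hbe
    | succ n ih => rw [hpws, hassoc _ (hpwS n) _ hbS _ heS, hbe]
  -- Cesàro averages, defined recursively
  set A : ℕ → V := fun n => Nat.rec (pw 0)
    (fun k Ak => (((k : ℝ) + 1) / ((k : ℝ) + 2)) • Ak
      + ((1 : ℝ) / ((k : ℝ) + 2)) • pw (k + 1)) n with hA_def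
  have hA0 : A 0 = pw 0 := rfl
  have hAs : ∀ n, A (n + 1) = (((n : ℝ) + 1) / ((n : ℝ) + 2)) • A n
      + ((1 : ℝ) / ((n : ℝ) + 2)) • pw (n + 1) := fun n => rfl
  have hc1 : ∀ n : ℕ, (0 : ℝ) ≤ ((n : ℝ) + 1) / ((n : ℝ) + 2) := by
    intro n; positivity
  have hc2 : ∀ n : ℕ, (0 : ℝ) ≤ (1 : ℝ) / ((n : ℝ) + 2) := by
    intro n; positivity
  have hcsum : ∀ n : ℕ, ((n : ℝ) + 1) / ((n : ℝ) + 2) + (1 : ℝ) / ((n : ℝ) + 2) = 1 := by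
    intro n
    have h2 : ((n : ℝ) + 2) ≠ 0 := by positivity
    field_simp
    ring
  have hAS : ∀ n, A n ∈ S := by
    intro n; induction n with
    | zero => exact hpwS 0
    | succ n ih =>
      rw [hAs]
      exact hSconv ih (hpwS (n + 1)) (hc1 n) (hc2 n) (hcsum n)
  have hAe : ∀ n, m (A n) e = A n := by
    intro n; induction n with
    | zero => exact hpwe 0
    | succ n ih =>
      rw [hAs n, haff e heS _ _ (hc1 n) (hc2 n) (hcsum n) _ (hAS n) _ (hpwS (n + 1)),
        ih, hpwe (n + 1)]
  have hAb : ∀ n, m (A n) b = A n + ((1 : ℝ) / ((n : ℝ) + 1)) • (pw (n + 1) - pw 0) := by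
    intro n; induction n with
    | zero =>
      rw [hA0, ← hpws 0]
      norm_num
    | succ n ih =>
      have hn1 : ((n : ℝ) + 1) ≠ 0 := by positivity
      have hn2 : ((n : ℝ) + 2) ≠ 0 := by positivity
      rw [hAs n, haff b hbS _ _ (hc1 n) (hc2 n) (hcsum n) _ (hAS n) _ (hpwS (n + 1)),
        ih, ← hpws (n + 1)]
      push_cast
      match_scalars <;> field_simp <;> ring
  -- a cluster point of the averages
  have hmapA : Filter.map A atTop ≤ 𝓟 S :=
    Filter.le_principal_iff.mpr (Filter.mem_map.mpr
    (Filter.Eventually.of_forall hAS : ∀ᶠ n in atTop, A n ∈ S))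
  obtain ⟨p, hpS, hp⟩ := hScomp.exists_mapClusterPt (u := A) (f := atTop) hmapA
  have key : ∀ (g : V → V) (z : V), ContinuousOn g S →
      Tendsto (fun n => g (A n)) atTop (𝓝 z) → g p = z := by
    intro g z hg hgz
    have h3 : 𝓝 p ⊓ Filter.map A atTop ≤ 𝓝[S] p :=
      le_inf inf_le_left (le_trans inf_le_right hmapA)
    have h4 : Filter.map g (𝓝 p ⊓ Filter.map A atTop) ≤ 𝓝 (g p) :=
      Filter.Tendsto.mono_left (hg p hpS) h3
    have h5 : Filter.map g (𝓝 p ⊓ Filter.map A atTop) ≤ 𝓝 z := by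
      calc Filter.map g (𝓝 p ⊓ Filter.map A atTop)
          ≤ Filter.map g (Filter.map A atTop) := Filter.map_mono inf_le_right
        _ = Filter.map (fun n => g (A n)) atTop := Filter.map_map
        _ ≤ 𝓝 z := hgz
    haveI h6 : (𝓝 p ⊓ Filter.map A atTop).NeBot := hp
    haveI h7 : (Filter.map g (𝓝 p ⊓ Filter.map A atTop)).NeBot := h6.map g
    exact eq_of_nhds_neBot (Filter.neBot_of_le (le_inf h4 h5))
  have hpe : m p e = p := by
    have := key (fun y => m y e - y) 0 ((hcont e heS).sub continuousOn_id)
      (by simp only [hAe, sub_self]; exact tendsto_const_nhds)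
    exact sub_eq_zero.mp this
  have hDlim : Tendsto (fun n : ℕ => ((1 : ℝ) / ((n : ℝ) + 1)) • (pw (n + 1) - pw 0))
      atTop (𝓝 0) := by
    letI : UniformSpace V := IsTopologicalAddGroup.rightUniformSpace V
    haveI : IsUniformAddGroup V := isUniformAddGroup_of_addCommGroup
    have hTcomp : IsCompact ((fun q : V × V => q.1 - q.2) '' (S ×ˢ S)) :=
      (hScomp.prod hScomp).image (continuous_fst.sub continuous_snd)
    have hTb : IsVonNBounded ℝ ((fun q : V × V => q.1 - q.2) '' (S ×ˢ S)) :=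
      hTcomp.totallyBounded.isVonNBounded ℝ
    have := hTb.smul_tendsto_zero (x := fun n : ℕ => pw (n + 1) - pw 0)
      (ε := fun n : ℕ => (1 : ℝ) / ((n : ℝ) + 1))
      (Filter.Eventually.of_forall fun n =>
        ⟨(pw (n + 1), pw 0), Set.mk_mem_prod (hpwS _) (hpwS 0), rfl⟩)
      tendsto_one_div_add_atTop_nhds_zero_nat
    exact this
  have hpb : m p b = p := by
    have := key (fun y => m y b - y) 0 ((hcont b hbS).sub continuousOn_id)
      (by
        have heq : (fun n => m (A n) b - A n)
            = fun n : ℕ => ((1 : ℝ) / ((n : ℝ) + 1)) • (pw (n + 1) - pw 0) :=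
          funext fun n => by rw [hAb n]; abel
        rw [heq]; exact hDlim)
    exact sub_eq_zero.mp this
  -- the compact subsemigroup of elements fixed by right mult. by e and b
  set F : Set V := {y | y ∈ S ∧ m y e = y ∧ m y b = y} with hF_def
  have hFsub : F ⊆ S := fun y hy => hy.1
  have hFne : F.Nonempty := ⟨p, hpS, hpe, hpb⟩
  have hFclosed : IsClosed F := by
    have hcl1 : IsClosed (S ∩ (fun y => m y e - y) ⁻¹' {0}) :=
      ((hcont e heS).sub continuousOn_id).preimage_isClosed_of_isClosed
        hScomp.isClosed isClosed_singleton
    have hcl2 : IsClosed (S ∩ (fun y => m y b - y) ⁻¹' {0}) :=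
      ((hcont b hbS).sub continuousOn_id).preimage_isClosed_of_isClosed
        hScomp.isClosed isClosed_singleton
    have hFeq : F = (S ∩ (fun y => m y e - y) ⁻¹' {0})
        ∩ (S ∩ (fun y => m y b - y) ⁻¹' {0}) := by
      ext y
      simp only [hF_def, Set.mem_setOf_eq, Set.mem_inter_iff, Set.mem_preimage,
        Set.mem_singleton_iff, sub_eq_zero]
      tauto
    rw [hFeq]
    exact hcl1.inter hcl2
  have hFcomp : IsCompact F := hScomp.of_isClosed_subset hFclosed hFsub
  have hFmul : ∀ y ∈ F, ∀ z ∈ F, m y z ∈ F := by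
    rintro y ⟨hyS, hye, hyb⟩ z ⟨hzS, hze, hzb⟩
    exact ⟨hmem _ hyS _ hzS,
      by rw [hassoc _ hyS _ hzS _ heS, hze],
      by rw [hassoc _ hyS _ hzS _ hbS, hzb]⟩
  -- Ellis–Namakura: an idempotent in F
  obtain ⟨r, hrF, hrr⟩ : ∃ r ∈ F, m r r = r := by
    letI : Semigroup F :=
      { mul := fun q t => ⟨m q.1 t.1, hFmul _ q.2 _ t.2⟩
        mul_assoc := fun q t u =>
          Subtype.ext (hassoc _ (hFsub q.2) _ (hFsub t.2) _ (hFsub u.2)) }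
    haveI : CompactSpace F := isCompact_iff_compactSpace.mp hFcomp
    haveI : Nonempty F := hFne.to_subtype
    have contF : ∀ t : F, Continuous (· * t) := by
      intro t
      have hres : Continuous (F.restrict fun y => m y t.1) :=
        ((hcont t.1 (hFsub t.2)).mono hFsub).restrict
      exact hres.subtype_mk _
    obtain ⟨r, hr⟩ := exists_idempotent_of_compact_t2_of_continuous_mul_left contF
    exact ⟨r.1, r.2, congrArg Subtype.val hr⟩
  obtain ⟨hrS, hre, hrb⟩ := hrF
  -- q = e * r is an idempotent commuting with e, hence equals e
  have hq2 : m (m e r) e = m e r := by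
    rw [hassoc _ heS _ hrS _ heS, hre]
  have hq3 : m e (m e r) = m e r := by
    rw [← hassoc _ heS _ heS _ hrS, he]
  have hq1 : m (m e r) (m e r) = m e r := by
    rw [← hassoc _ (hmem _ heS _ hrS) _ heS _ hrS, hq2,
      hassoc _ heS _ hrS _ hrS, hrr]
  have hqe : m e r = e := hemin _ (hmem _ heS _ hrS) hq1 hq2 hq3
  calc b = m e b := heb.symm
    _ = m (m e r) b := by rw [hqe]
    _ = m e (m r b) := hassoc _ heS _ hrS _ hbS
    _ = m e r := by rw [hrb]
    _ = e := hqe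
end

section
/- Let S be a compact affine right topological semigroup and f a minimal idempotent. Then S*f is a minimal closed left ideal of S. -/
/-- If f is a minimal idempotent of a compact affine right topological
semigroup S, then S*f is a minimal closed left ideal of S. -/
theorem stmt_12 {V : Type*} [AddCommGroup V] [Module ℝ V] [TopologicalSpace V]
    [IsTopologicalAddGroup V] [ContinuousSMul ℝ V] [T2Space V]
    [LocallyConvexSpace ℝ V]
    (S : Set V) (hScomp : IsCompact S) (hSconv : Convex ℝ S)
    (hSne : S.Nonempty)
    (m : V → V → V)
    (hmem : ∀ x ∈ S, ∀ y ∈ S, m x y ∈ S)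
    (hassoc : ∀ x ∈ S, ∀ y ∈ S, ∀ z ∈ S, m (m x y) z = m x (m y z))
    (haff : ∀ y ∈ S, ∀ a b : ℝ, 0 ≤ a → 0 ≤ b → a + b = 1 →
      ∀ x ∈ S, ∀ x' ∈ S, m (a • x + b • x') y = a • m x y + b • m x' y)
    (hcont : ∀ y ∈ S, ContinuousOn (fun x => m x y) S)
    (f : V) (hfS : f ∈ S) (hf : m f f = f)
    (hfmin : ∀ g ∈ S, m g g = g → m g f = g → m f g = g → g = f) :
    IsClosed {z : V | ∃ x ∈ S, m x f = z} ∧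
    {z : V | ∃ x ∈ S, m x f = z}.Nonempty ∧
    {z : V | ∃ x ∈ S, m x f = z} ⊆ S ∧
    (∀ x ∈ S, ∀ j ∈ {z : V | ∃ x ∈ S, m x f = z}, m x j ∈ {z : V | ∃ x ∈ S, m x f = z}) ∧
    (∀ J' : Set V, J' ⊆ {z : V | ∃ x ∈ S, m x f = z} → IsClosed J' → J'.Nonempty →
      (∀ x ∈ S, ∀ j ∈ J', m x j ∈ J') → J' = {z : V | ∃ x ∈ S, m x f = z}) := by
  set L : Set V := {z : V | ∃ x ∈ S, m x f = z} with hL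
  have hLimg : L = (fun x => m x f) '' S := by
    ext z; simp [hL, Set.mem_image]
  have hLS : L ⊆ S := by
    rintro z ⟨x, hx, rfl⟩
    exact hmem x hx f hfS
  have hLclosed : IsClosed L := by
    rw [hLimg]
    exact (hScomp.image_of_continuousOn (hcont f hfS)).isClosed
  have hLne : L.Nonempty := ⟨f, f, hfS, hf⟩
  have hLideal : ∀ x ∈ S, ∀ j ∈ L, m x j ∈ L := by
    rintro x hx j ⟨a, ha, rfl⟩
    exact ⟨m x a, hmem x hx a ha, hassoc x hx a ha f hfS⟩
  -- every element of L is right-fixed by f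
  have hRfix : ∀ z ∈ L, m z f = z := by
    rintro z ⟨a, ha, rfl⟩
    rw [hassoc a ha f hfS f hfS, hf]
  refine ⟨hLclosed, hLne, hLS, hLideal, ?_⟩
  intro J' hJL hJclosed hJne hJideal
  have hJS : J' ⊆ S := hJL.trans hLS
  -- J' is a compact subsemigroup; find an idempotent e ∈ J'
  have hJcomp : IsCompact J' := hScomp.of_isClosed_subset hJclosed hJS
  obtain ⟨e, heJ, hee⟩ : ∃ e ∈ J', m e e = e := by
    let M' := { x // x ∈ J' }
    letI : Semigroup M' :=
      { mul := fun p q => ⟨m p.1 q.1, hJideal p.1 (hJS p.2) q.1 q.2⟩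
        mul_assoc := fun p q r => Subtype.eq
          (hassoc p.1 (hJS p.2) q.1 (hJS q.2) r.1 (hJS r.2)) }
    haveI : CompactSpace M' := isCompact_iff_compactSpace.mp hJcomp
    haveI : Nonempty M' := nonempty_subtype.mpr hJne
    have hc : ∀ p : M', Continuous (· * p) := by
      intro p
      have : Continuous fun q : M' => m q.1 p.1 :=
        (hcont p.1 (hJS p.2)).comp_continuous continuous_subtype_val
          (fun q => hJS q.2)
      exact this.subtype_mk _
    obtain ⟨⟨e, he⟩, idem⟩ := exists_idempotent_of_compact_t2_of_continuous_mul_left hc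
    exact ⟨e, he, Subtype.ext_iff.mp idem⟩
  have heS : e ∈ S := hJS heJ
  have hef : m e f = e := hRfix e (hJL heJ)
  -- g = f*e is an idempotent below f, hence g = f
  have hgS : m f e ∈ S := hmem f hfS e heS
  have hgg : m (m f e) (m f e) = m f e := by
    rw [hassoc f hfS e heS (m f e) hgS, ← hassoc e heS f hfS e heS, hef, hee]
  have hgf : m (m f e) f = m f e := by
    rw [hassoc f hfS e heS f hfS, hef]
  have hfg : m f (m f e) = m f e := by
    rw [← hassoc f hfS f hfS e heS, hf]
  have hfe : m f e = f := hfmin (m f e) hgS hgg hgf hfg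
  -- conclude L ⊆ J'
  refine Set.Subset.antisymm hJL ?_
  rintro z ⟨x, hx, rfl⟩
  have : m x f = m (m x f) e := by
    conv_lhs => rw [← hfe, ← hassoc x hx f hfS e heS]
  rw [this]
  exact hJideal (m x f) (hmem x hx f hfS) e heJ
end

section
/- Let X = Y* be a dual Banach space and E ⊆ X a closed subspace. The set S of all linear contractions φ : X → X with φ(x) = x for all x ∈ E is a closed convex subsemigroup of C(X) in the pointwise-weak* topology, and hence (being compact) contains a minimal idempotent φ. The range φ(X) then equals the fixed point set of φ and contains E. -/
open Set

section Aux

variable (Y : Type*) [NormedAddCommGroup Y] [NormedSpace ℝ Y]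

/-- The semigroup of self-maps of the dual under composition. -/
noncomputable local instance auxSemigroup : Semigroup ((Y →L[ℝ] ℝ) → WeakDual ℝ Y) where
  mul f g := fun x => f (g x)
  mul_assoc _ _ _ := rfl

/-- The canonical (identity) map from the normed dual to the weak* dual. -/
def auxI : (Y →L[ℝ] ℝ) → WeakDual ℝ Y := fun x => x

/-- The norm ball, as a weak*-closed subset of the weak* dual. -/
def auxB (r : ℝ) : Set (WeakDual ℝ Y) :=
  WeakDual.toStrongDual ⁻¹' Metric.closedBall (0 : StrongDual ℝ Y) r

theorem auxB_mem {w : WeakDual ℝ Y} {r : ℝ} :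
    w ∈ auxB Y r ↔ ‖WeakDual.toStrongDual w‖ ≤ r := by
  simp [auxB, Metric.mem_closedBall, dist_zero_right]

variable (E : Submodule ℝ (Y →L[ℝ] ℝ))

def auxTheta : ((Y →L[ℝ] ℝ) →ₗ[ℝ] (Y →L[ℝ] ℝ)) → ((Y →L[ℝ] ℝ) → WeakDual ℝ Y) :=
  fun T x => auxI Y (T x)

def auxS : Set ((Y →L[ℝ] ℝ) →ₗ[ℝ] (Y →L[ℝ] ℝ)) :=
  {T | (∀ x, ‖T x‖ ≤ ‖x‖) ∧ ∀ x ∈ E, T x = x}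

def auxK : Set ((Y →L[ℝ] ℝ) → WeakDual ℝ Y) :=
  {f | (∀ a b, f (a + b) = f a + f b) ∧ (∀ (c : ℝ) a, f (c • a) = c • f a) ∧
    (∀ x, f x ∈ auxB Y ‖x‖) ∧ ∀ x ∈ E, f x = auxI Y x}

theorem auxTheta_mul (T T' : (Y →L[ℝ] ℝ) →ₗ[ℝ] (Y →L[ℝ] ℝ)) :
    auxTheta Y (T.comp T') = auxTheta Y T * auxTheta Y T' := rfl

theorem auxTheta_inj : Function.Injective (auxTheta Y) := by
  intro T T' h
  exact LinearMap.ext fun x => congrFun h x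

theorem auxK_eq : auxTheta Y '' auxS Y E = auxK Y E := by
  apply Set.Subset.antisymm
  · rintro _ ⟨T, ⟨hn, hf⟩, rfl⟩
    refine ⟨fun a b => T.map_add a b, fun c a => T.map_smul c a, fun x => ?_, fun x hx => ?_⟩
    · exact (auxB_mem Y).mpr (hn x)
    · exact congrArg (auxI Y) (hf x hx)
  · rintro f ⟨ha, hs, hb, hf⟩
    refine ⟨{ toFun := fun x => WeakDual.toStrongDual (f x), map_add' := ha, map_smul' := hs },
      ⟨fun x => (auxB_mem Y).mp (hb x), fun x hx => hf x hx⟩, rfl⟩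

theorem auxK_closed : IsClosed (auxK Y E) := by
  have h1 : IsClosed {f : (Y →L[ℝ] ℝ) → WeakDual ℝ Y | ∀ a b, f (a + b) = f a + f b} := by
    have : {f : (Y →L[ℝ] ℝ) → WeakDual ℝ Y | ∀ a b, f (a + b) = f a + f b} =
        ⋂ a, ⋂ b, {f : (Y →L[ℝ] ℝ) → WeakDual ℝ Y | f (a + b) = f a + f b} := by ext f; simp
    rw [this]
    exact isClosed_iInter fun a => isClosed_iInter fun b =>
      isClosed_eq (continuous_apply _) ((continuous_apply a).add (continuous_apply b))
  have h2 : IsClosed {f : (Y →L[ℝ] ℝ) → WeakDual ℝ Y | ∀ (c : ℝ) a, f (c • a) = c • f a} := by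
    have : {f : (Y →L[ℝ] ℝ) → WeakDual ℝ Y | ∀ (c : ℝ) a, f (c • a) = c • f a} =
        ⋂ (c : ℝ), ⋂ a, {f : (Y →L[ℝ] ℝ) → WeakDual ℝ Y | f (c • a) = c • f a} := by ext f; simp
    rw [this]
    exact isClosed_iInter fun c => isClosed_iInter fun a =>
      isClosed_eq (continuous_apply _) ((continuous_apply a).const_smul c)
  have h3 : IsClosed {f : (Y →L[ℝ] ℝ) → WeakDual ℝ Y | ∀ x, f x ∈ auxB Y ‖x‖} := by
    have : {f : (Y →L[ℝ] ℝ) → WeakDual ℝ Y | ∀ x, f x ∈ auxB Y ‖x‖} =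
        ⋂ x, (fun f : (Y →L[ℝ] ℝ) → WeakDual ℝ Y => f x) ⁻¹' auxB Y ‖x‖ := by ext f; simp
    rw [this]
    refine isClosed_iInter fun x => IsClosed.preimage (continuous_apply x) ?_
    exact (WeakDual.isCompact_closedBall (𝕜 := ℝ) (E := Y) 0 ‖x‖).isClosed
  have h4 : IsClosed {f : (Y →L[ℝ] ℝ) → WeakDual ℝ Y | ∀ x ∈ E, f x = auxI Y x} := by
    have : {f : (Y →L[ℝ] ℝ) → WeakDual ℝ Y | ∀ x ∈ E, f x = auxI Y x} =
        ⋂ x, ⋂ (_ : x ∈ E), {f : (Y →L[ℝ] ℝ) → WeakDual ℝ Y | f x = auxI Y x} := by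
      ext f; simp
    rw [this]
    exact isClosed_iInter fun x => isClosed_iInter fun _ =>
      isClosed_eq (continuous_apply x) continuous_const
  have hK : auxK Y E = {f : (Y →L[ℝ] ℝ) → WeakDual ℝ Y | ∀ a b, f (a + b) = f a + f b} ∩
      ({f | ∀ (c : ℝ) a, f (c • a) = c • f a} ∩
        ({f | ∀ x, f x ∈ auxB Y ‖x‖} ∩ {f | ∀ x ∈ E, f x = auxI Y x})) := by
    ext f; simp only [auxK, mem_setOf_eq, mem_inter_iff, and_assoc]
  rw [hK]
  exact h1.inter (h2.inter (h3.inter h4))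

theorem auxK_compact : IsCompact (auxK Y E) := by
  refine IsCompact.of_isClosed_subset
    (isCompact_univ_pi fun x : Y →L[ℝ] ℝ => WeakDual.isCompact_closedBall (𝕜 := ℝ) (E := Y) 0 ‖x‖)
    (auxK_closed Y E) ?_
  intro f hf x _
  exact hf.2.2.1 x

theorem auxK_mul {f g : (Y →L[ℝ] ℝ) → WeakDual ℝ Y} (hf : f ∈ auxK Y E) (hg : g ∈ auxK Y E) :
    f * g ∈ auxK Y E := by
  obtain ⟨ha, hs, hb, hfix⟩ := hf
  obtain ⟨ga, gs, gb, gfix⟩ := hg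
  refine ⟨fun a b => ?_, fun c a => ?_, fun x => ?_, fun x hx => ?_⟩
  · show f (g (a + b)) = f (g a) + f (g b)
    rw [ga a b]; exact ha (g a) (g b)
  · show f (g (c • a)) = c • f (g a)
    rw [gs c a]; exact hs c (g a)
  · show f (g x) ∈ auxB Y ‖x‖
    refine (auxB_mem Y).mpr (le_trans ((auxB_mem Y).mp (hb (g x))) ((auxB_mem Y).mp (gb x)))
  · show f (g x) = auxI Y x
    rw [gfix x hx]; exact hfix x hx

theorem aux_mul_cont (r : (Y →L[ℝ] ℝ) → WeakDual ℝ Y) :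
    Continuous (· * r) :=
  continuous_pi fun x => continuous_apply (r x)

theorem auxK_nonempty : (auxK Y E).Nonempty := by
  rw [← auxK_eq]
  exact ⟨_, ⟨LinearMap.id, ⟨fun x => le_refl _, fun x _ => rfl⟩, rfl⟩⟩

/-- Existence of a minimal idempotent in the compact right-topological semigroup `auxK`. -/
theorem aux_min_idem : ∃ e ∈ auxK Y E, e * e = e ∧
    ∀ g ∈ auxK Y E, g * g = g → g * e = g → e * g = g → g = e := by
  classical
  set K := auxK Y E with hK
  -- collection of closed nonempty left ideals
  set S₀ : Set (Set ((Y →L[ℝ] ℝ) → WeakDual ℝ Y)) :=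
    {L | L ⊆ K ∧ L.Nonempty ∧ IsClosed L ∧ ∀ f ∈ K, ∀ g ∈ L, f * g ∈ L} with hS₀
  have hKS : K ∈ S₀ :=
    ⟨le_refl _, auxK_nonempty Y E, auxK_closed Y E, fun f hf g hg => auxK_mul Y E hf hg⟩
  have hcomp : ∀ L ∈ S₀, IsCompact L := fun L hL =>
    IsCompact.of_isClosed_subset (auxK_compact Y E) hL.2.2.1 hL.1
  have H : ∀ c ⊆ S₀, IsChain (· ⊆ ·) c → c.Nonempty →
      ∃ lb ∈ S₀, ∀ s ∈ c, lb ⊆ s := by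
    intro c hcS hchain hcne
    haveI : Nonempty c := hcne.to_subtype
    obtain ⟨U₀, hU₀⟩ := hcne
    refine ⟨⋂₀ c, ⟨?_, ?_, ?_, ?_⟩, fun s hs => sInter_subset_of_mem hs⟩
    · exact (sInter_subset_of_mem hU₀).trans (hcS hU₀).1
    · have hdir : DirectedOn (· ⊇ ·) c := fun U hU V hV =>
        (hchain.total hU hV).elim (fun h => ⟨U, hU, Subset.rfl, h⟩)
          (fun h => ⟨V, hV, h, Subset.rfl⟩)
      exact IsCompact.nonempty_sInter_of_directed_nonempty_isCompact_isClosed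
        hdir (fun U hU => (hcS hU).2.1) (fun U hU => hcomp U (hcS hU))
        (fun U hU => (hcS hU).2.2.1)
    · exact isClosed_sInter fun U hU => (hcS hU).2.2.1
    · intro f hf g hg
      exact fun U hU => (hcS hU).2.2.2 f hf g (hg U hU)
  obtain ⟨L, -, hLmin⟩ := zorn_superset_nonempty S₀ H K hKS
  obtain ⟨hLK, hLne, hLcl, hLid⟩ := hLmin.1
  have hLcomp : IsCompact L := hcomp L hLmin.1
  -- idempotent in L
  obtain ⟨e, heL, hee⟩ := exists_idempotent_in_compact_subsemigroup (aux_mul_cont Y) L hLne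
    hLcomp (fun x hx y hy => hLid x (hLK hx) y hy)
  have heK : e ∈ K := hLK heL
  -- for t ∈ L, K * t is a member of S₀ contained in L, hence equals L
  have hKt : ∀ t ∈ L, (fun f => f * t) '' K = L := by
    intro t ht
    have h1 : (fun f => f * t) '' K ⊆ L := by
      rintro _ ⟨f, hf, rfl⟩; exact hLid f hf t ht
    have h2 : (fun f => f * t) '' K ∈ S₀ := by
      refine ⟨h1.trans hLK, (auxK_nonempty Y E).image _, ?_, ?_⟩
      · exact ((auxK_compact Y E).image (aux_mul_cont Y t)).isClosed
      · rintro f hf _ ⟨k, hk, rfl⟩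
        exact ⟨f * k, auxK_mul Y E hf hk, (mul_assoc f k t).symm⟩
    exact Set.Subset.antisymm h1 (hLmin.2 h2 h1)
  refine ⟨e, heK, hee, ?_⟩
  intro g hgK hgg hge heg
  have hgL : g ∈ L := by
    have := hLid g hgK e heL
    rwa [hge] at this
  have : e ∈ (fun f => f * g) '' K := (hKt g hgL).symm ▸ heL
  obtain ⟨k, hk, hkg⟩ := this
  have h1 : e * g = e := by
    rw [← hkg, mul_assoc, hgg]
  rw [heg] at h1
  exact h1

/-- The existence part of the main theorem. -/
theorem aux_exists : ∃ φ : (Y →L[ℝ] ℝ) →ₗ[ℝ] (Y →L[ℝ] ℝ),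
    (∀ x, ‖φ x‖ ≤ ‖x‖) ∧ (∀ x ∈ E, φ x = x) ∧
    φ.comp φ = φ ∧
    (∀ ψ : (Y →L[ℝ] ℝ) →ₗ[ℝ] (Y →L[ℝ] ℝ),
      (∀ x, ‖ψ x‖ ≤ ‖x‖) → (∀ x ∈ E, ψ x = x) → ψ.comp ψ = ψ →
      ψ.comp φ = ψ → φ.comp ψ = ψ → ψ = φ) ∧
    LinearMap.range φ = {x : Y →L[ℝ] ℝ | φ x = x} ∧
    (E : Set (Y →L[ℝ] ℝ)) ⊆ LinearMap.range φ := by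
  obtain ⟨e, heK, hee, hemin⟩ := aux_min_idem Y E
  rw [← auxK_eq] at heK
  obtain ⟨φ, hφS, hφe⟩ := heK
  have hcomp : φ.comp φ = φ := by
    apply auxTheta_inj Y
    rw [auxTheta_mul, hφe, hee]
  refine ⟨φ, hφS.1, hφS.2, hcomp, ?_, ?_, ?_⟩
  · intro ψ hψn hψf hψψ hψφ hφψ
    have hψK : auxTheta Y ψ ∈ auxK Y E := by
      rw [← auxK_eq]; exact ⟨ψ, ⟨hψn, hψf⟩, rfl⟩
    have h1 : auxTheta Y ψ * auxTheta Y ψ = auxTheta Y ψ := by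
      rw [← auxTheta_mul, hψψ]
    have h2 : auxTheta Y ψ * e = auxTheta Y ψ := by
      rw [← hφe, ← auxTheta_mul, hψφ]
    have h3 : e * auxTheta Y ψ = auxTheta Y ψ := by
      rw [← hφe, ← auxTheta_mul, hφψ]
    have h4 := hemin (auxTheta Y ψ) hψK h1 h2 h3
    apply auxTheta_inj Y
    rw [h4, hφe]
  · ext x
    constructor
    · rintro ⟨y, rfl⟩
      show φ (φ y) = φ y
      exact LinearMap.congr_fun hcomp y
    · intro hx
      exact ⟨x, hx⟩
  · intro x hx
    exact ⟨x, hφS.2 x hx⟩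

/-- The closedness part of the main theorem (the image is closed even in the pointwise
norm topology, since it is the preimage of the weak*-pointwise-closed set `auxK` under
the continuous identity map). -/
theorem aux_part1 : IsClosed ((fun (T : (Y →L[ℝ] ℝ) →ₗ[ℝ] (Y →L[ℝ] ℝ)) (x : Y →L[ℝ] ℝ) =>
      (T x : WeakDual ℝ Y)) '' {T | (∀ x, ‖T x‖ ≤ ‖x‖) ∧ ∀ x ∈ E, T x = x}) := by
  have hι : Continuous fun (f : (Y →L[ℝ] ℝ) → (Y →L[ℝ] ℝ)) (x : Y →L[ℝ] ℝ) =>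
      StrongDual.toWeakDual (f x) :=
    continuous_pi fun x => NormedSpace.Dual.toWeakDual_continuous.comp (continuous_apply x)
  have key : ((fun (T : (Y →L[ℝ] ℝ) →ₗ[ℝ] (Y →L[ℝ] ℝ)) (x : Y →L[ℝ] ℝ) =>
      (T x : WeakDual ℝ Y)) '' {T | (∀ x, ‖T x‖ ≤ ‖x‖) ∧ ∀ x ∈ E, T x = x}) =
      (fun (f : (Y →L[ℝ] ℝ) → (Y →L[ℝ] ℝ)) (x : Y →L[ℝ] ℝ) =>
        StrongDual.toWeakDual (f x)) ⁻¹' (auxK Y E) := by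
    ext f
    constructor
    · rintro ⟨T, hT, rfl⟩
      show (fun x => StrongDual.toWeakDual (T x)) ∈ auxK Y E
      rw [← auxK_eq]
      exact ⟨T, hT, rfl⟩
    · intro hf
      rw [← auxK_eq] at hf
      obtain ⟨T, hT, hTf⟩ := hf
      refine ⟨T, hT, funext fun x => ?_⟩
      exact congrFun hTf x
  rw [key]
  exact (auxK_closed Y E).preimage hι

end Aux

/-- For a dual Banach space X = Y* and a closed subspace E ⊆ X, the set S of
linear contractions fixing E pointwise is a closed (in the pointwise weak*
topology) convex subsemigroup of the contractions, and contains a minimal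
idempotent φ whose range equals its fixed-point set and contains E. -/
theorem stmt_15 (Y : Type*) [NormedAddCommGroup Y] [NormedSpace ℝ Y]
    [CompleteSpace Y] (E : Submodule ℝ (Y →L[ℝ] ℝ))
    (hE : IsClosed (E : Set (Y →L[ℝ] ℝ))) :
    IsClosed ((fun (T : (Y →L[ℝ] ℝ) →ₗ[ℝ] (Y →L[ℝ] ℝ)) (x : Y →L[ℝ] ℝ) =>
        (T x : WeakDual ℝ Y)) ''
      {T | (∀ x, ‖T x‖ ≤ ‖x‖) ∧ ∀ x ∈ E, T x = x}) ∧
    Convex ℝ {T : (Y →L[ℝ] ℝ) →ₗ[ℝ] (Y →L[ℝ] ℝ) |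
      (∀ x, ‖T x‖ ≤ ‖x‖) ∧ ∀ x ∈ E, T x = x} ∧
    (∀ T T' : (Y →L[ℝ] ℝ) →ₗ[ℝ] (Y →L[ℝ] ℝ),
      ((∀ x, ‖T x‖ ≤ ‖x‖) ∧ ∀ x ∈ E, T x = x) →
      ((∀ x, ‖T' x‖ ≤ ‖x‖) ∧ ∀ x ∈ E, T' x = x) →
      ((∀ x, ‖T.comp T' x‖ ≤ ‖x‖) ∧ ∀ x ∈ E, T.comp T' x = x)) ∧
    ∃ φ : (Y →L[ℝ] ℝ) →ₗ[ℝ] (Y →L[ℝ] ℝ),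
      (∀ x, ‖φ x‖ ≤ ‖x‖) ∧ (∀ x ∈ E, φ x = x) ∧
      φ.comp φ = φ ∧
      (∀ ψ : (Y →L[ℝ] ℝ) →ₗ[ℝ] (Y →L[ℝ] ℝ),
        (∀ x, ‖ψ x‖ ≤ ‖x‖) → (∀ x ∈ E, ψ x = x) → ψ.comp ψ = ψ →
        ψ.comp φ = ψ → φ.comp ψ = ψ → ψ = φ) ∧
      LinearMap.range φ = {x : Y →L[ℝ] ℝ | φ x = x} ∧
      (E : Set (Y →L[ℝ] ℝ)) ⊆ LinearMap.range φ := by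
  refine ⟨aux_part1 Y E, ?_, ?_, aux_exists Y E⟩
  · -- convexity
    intro T hT T' hT' a b ha hb hab
    refine ⟨fun x => ?_, fun x hx => ?_⟩
    · calc ‖(a • T + b • T') x‖ = ‖a • T x + b • T' x‖ := rfl
        _ ≤ ‖a • T x‖ + ‖b • T' x‖ := norm_add_le _ _
        _ = a * ‖T x‖ + b * ‖T' x‖ := by
            rw [norm_smul a (T x), norm_smul b (T' x), Real.norm_eq_abs, Real.norm_eq_abs,
              abs_of_nonneg ha, abs_of_nonneg hb]
        _ ≤ a * ‖x‖ + b * ‖x‖ :=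
            add_le_add (mul_le_mul_of_nonneg_left (hT.1 x) ha)
              (mul_le_mul_of_nonneg_left (hT'.1 x) hb)
        _ = ‖x‖ := by rw [← add_mul, hab, one_mul]
    · show a • T x + b • T' x = x
      rw [hT.2 x hx, hT'.2 x hx, ← add_smul, hab, one_smul]
  · -- subsemigroup
    intro T T' hT hT'
    refine ⟨fun x => ?_, fun x hx => ?_⟩
    · exact le_trans (hT.1 (T' x)) (hT'.1 x)
    · rw [LinearMap.comp_apply, hT'.2 x hx, hT.2 x hx]
end
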